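/- (Unique global minimizer of the off-policy loss) Let μ be a full-support behavior policy and for a full-support policy π define L_μ(π) = (1/2)·Σ_x ρ(x)·Var_{y∼μ(·|x)}(R^π_β(x,·)). Then L_μ(π) ≥ 0 for all full-support π, L_μ(π*) = 0, and if L_μ(π) = 0 for a full-support policy π, then π(·|x) = π*(·|x) for every x with ρ(x) > 0. -/

import Mathlib

open Finset

noncomputable section

/-- The optimal regularized policy `π*`. -/
def piStar {X Y : Type*} [Fintype Y] (πref r : X → Y → ℝ) (β : ℝ) (x : X) (y : Y) : ℝ :=
  πref x y * Real.exp (r x y / β) / ∑ y', πref x y' * Real.exp (r x y' / β)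

/-- The regularized reward `R^π_β(x,y)`. -/
def Rreg {X Y : Type*} (πref r : X → Y → ℝ) (β : ℝ) (π : X → Y → ℝ) (x : X) (y : Y) : ℝ :=
  r x y - β * Real.log (π x y / πref x y)

/-- Variance of `f` under the distribution `μ` on a finite type. -/
def Var {Y : Type*} [Fintype Y] (μ : Y → ℝ) (f : Y → ℝ) : ℝ :=
  ∑ y, μ y * (f y - ∑ y', μ y' * f y') ^ 2

/-- Off-policy loss `L_μ(π)`. -/
def Lmu {X Y : Type*} [Fintype X] [Fintype Y] (ρ : X → ℝ) (πref r : X → Y → ℝ) (β : ℝ)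
    (μ π : X → Y → ℝ) : ℝ :=
  (1 / 2) * ∑ x, ρ x * Var (μ x) (Rreg πref r β π x)

lemma var_nonneg {Y : Type*} [Fintype Y] (μ : Y → ℝ) (hμ : ∀ y, 0 ≤ μ y) (f : Y → ℝ) :
    0 ≤ Var μ f :=
  Finset.sum_nonneg fun y _ => mul_nonneg (hμ y) (sq_nonneg _)

lemma lmu_nonneg {X Y : Type*} [Fintype X] [Fintype Y] (ρ : X → ℝ) (hρ : ∀ x, 0 ≤ ρ x)
    (πref r : X → Y → ℝ) (β : ℝ) (μ π : X → Y → ℝ) (hμ : ∀ x y, 0 ≤ μ x y) :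
    0 ≤ Lmu ρ πref r β μ π := by
  apply mul_nonneg (by norm_num)
  exact Finset.sum_nonneg fun x _ => mul_nonneg (hρ x) (var_nonneg _ (hμ x) _)

lemma var_const {Y : Type*} [Fintype Y] (μ : Y → ℝ) (hμsum : ∑ y, μ y = 1) (f : Y → ℝ)
    (c : ℝ) (hf : ∀ y, f y = c) : Var μ f = 0 := by
  unfold Var
  have h : ∑ y', μ y' * f y' = c := by
    simp only [hf]; rw [← Finset.sum_mul, hμsum, one_mul]
  apply Finset.sum_eq_zero
  intro y _
  rw [hf, h]; ring

/-- `π*` is the unique global minimizer of the off-policy loss. -/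
theorem off_policy_loss_unique_global_minimizer
    {X Y : Type*} [Fintype X] [Fintype Y] [Nonempty X] [Nonempty Y]
    (πref : X → Y → ℝ) (href_pos : ∀ x y, 0 < πref x y)
    (href_sum : ∀ x, ∑ y, πref x y = 1)
    (r : X → Y → ℝ) (β : ℝ) (hβ : 0 < β)
    (ρ : X → ℝ) (hρ_nonneg : ∀ x, 0 ≤ ρ x) (hρ_sum : ∑ x, ρ x = 1)
    (μ : X → Y → ℝ) (hμ_pos : ∀ x y, 0 < μ x y) (hμ_sum : ∀ x, ∑ y, μ x y = 1) :
    (∀ π : X → Y → ℝ, (∀ x y, 0 < π x y) → (∀ x, ∑ y, π x y = 1) →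
        0 ≤ Lmu ρ πref r β μ π) ∧
    Lmu ρ πref r β μ (piStar πref r β) = 0 ∧
    (∀ π : X → Y → ℝ, (∀ x y, 0 < π x y) → (∀ x, ∑ y, π x y = 1) →
        Lmu ρ πref r β μ π = 0 →
        ∀ x, 0 < ρ x → ∀ y, π x y = piStar πref r β x y) := by
  have hZpos : ∀ x, 0 < ∑ y', πref x y' * Real.exp (r x y' / β) := fun x =>
    Finset.sum_pos (fun y _ => mul_pos (href_pos x y) (Real.exp_pos _)) univ_nonempty
  -- Rreg of piStar is constant in y
  have hRstar : ∀ x y, Rreg πref r β (piStar πref r β) x y =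
      β * Real.log (∑ y', πref x y' * Real.exp (r x y' / β)) := by
    intro x y
    unfold Rreg piStar
    have h1 : πref x y * Real.exp (r x y / β) / (∑ y', πref x y' * Real.exp (r x y' / β)) /
        πref x y = Real.exp (r x y / β) / (∑ y', πref x y' * Real.exp (r x y' / β)) := by
      rw [div_right_comm, mul_comm (πref x y), mul_div_assoc,
        div_self (ne_of_gt (href_pos x y)), mul_one]
    rw [h1, Real.log_div (Real.exp_ne_zero _) (ne_of_gt (hZpos x)), Real.log_exp]
    field_simp
    ring
  refine ⟨fun π hπpos hπsum => lmu_nonneg _ hρ_nonneg _ _ _ _ _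
    (fun x y => (hμ_pos x y).le), ?_, ?_⟩
  · unfold Lmu
    rw [Finset.sum_eq_zero, mul_zero]
    intro x _
    rw [var_const (μ x) (hμ_sum x) _ _ (hRstar x), mul_zero]
  · intro π hπpos hπsum hL x hρx y
    -- each term of the sum is zero
    have hsum0 : ∑ x, ρ x * Var (μ x) (Rreg πref r β π x) = 0 := by
      have := hL
      unfold Lmu at this
      linarith
    have hterm : ρ x * Var (μ x) (Rreg πref r β π x) = 0 := by
      have := (Finset.sum_eq_zero_iff_of_nonneg
        (fun x _ => mul_nonneg (hρ_nonneg x) (var_nonneg _ (fun y => (hμ_pos x y).le) _))).mp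
        hsum0 x (mem_univ x)
      exact this
    have hvar0 : Var (μ x) (Rreg πref r β π x) = 0 := by
      rcases mul_eq_zero.mp hterm with h | h
      · exact absurd h (ne_of_gt hρx)
      · exact h
    -- hence Rreg is constant = mean m
    set m := ∑ y', μ x y' * Rreg πref r β π x y' with hm
    have hRc : ∀ y, Rreg πref r β π x y = m := by
      intro y
      have h := (Finset.sum_eq_zero_iff_of_nonneg
        (fun y _ => mul_nonneg (hμ_pos x y).le (sq_nonneg _))).mp hvar0 y (mem_univ y)
      rcases mul_eq_zero.mp h with h' | h'
      · exact absurd h' (ne_of_gt (hμ_pos x y))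
      · have := pow_eq_zero_iff (n := 2) (by norm_num) |>.mp h'
        linarith
    -- solve for π
    have hπ_eq : ∀ y, π x y = πref x y * Real.exp ((r x y - m) / β) := by
      intro y
      have h := hRc y
      unfold Rreg at h
      have hlog : Real.log (π x y / πref x y) = (r x y - m) / β := by
        field_simp at h ⊢
        linarith
      have := congrArg Real.exp hlog
      rw [Real.exp_log (div_pos (hπpos x y) (href_pos x y))] at this
      rw [div_eq_iff (ne_of_gt (href_pos x y))] at this
      rw [this]; ring
    have hnorm : Real.exp (-m / β) * (∑ y', πref x y' * Real.exp (r x y' / β)) = 1 := by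
      have : ∑ y', πref x y' * Real.exp ((r x y' - m) / β) = 1 := by
        rw [← hπsum x]; exact Finset.sum_congr rfl fun y _ => (hπ_eq y).symm
      rw [← this, Finset.mul_sum]
      apply Finset.sum_congr rfl
      intro y _
      rw [mul_comm (Real.exp (-m / β)), mul_assoc, ← Real.exp_add, ← add_div,
        ← sub_eq_add_neg]
    rw [hπ_eq y]
    unfold piStar
    have hexp : Real.exp ((r x y - m) / β) =
        Real.exp (r x y / β) * Real.exp (-m / β) := by
      rw [← Real.exp_add, ← add_div, ← sub_eq_add_neg]
    rw [hexp]
    rw [eq_div_iff (ne_of_gt (hZpos x))]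
    calc πref x y * (Real.exp (r x y / β) * Real.exp (-m / β)) *
          (∑ y', πref x y' * Real.exp (r x y' / β))
        = πref x y * Real.exp (r x y / β) *
          (Real.exp (-m / β) * (∑ y', πref x y' * Real.exp (r x y' / β))) := by ring
      _ = πref x y * Real.exp (r x y / β) := by rw [hnorm, mul_one]
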